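/- Let n, p ≥ 1, R ≥ 1, W̃ ∈ ℝ^{n×p} with rows w̃_i, z̃ ∈ ℝ^n, λ ≥ 0 and γ_1,…,γ_R ≥ 0. If β̂ is a local minimizer of F(β) = (1/(2n))∑_{i=1}^n (z̃_i − w̃_iᵀβ)² + λ‖β‖₁ + ∑_{r=1}^R γ_r ‖β‖₁^{r+1}, then for every j = 1,…,p: (1/n)|∑_{i=1}^n w̃_{ij}(z̃_i − w̃_iᵀβ̂)| ≤ λ + ∑_{r=1}^R γ_r (r+1) ‖β̂‖₁^r. -/

import Mathlib

open Finset Filter Topology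


/-- KKT bound for the generalized matrix uncertainty lasso weighted least
squares step: a local minimizer `β̂` of
`F(β) = (1/(2n))∑ᵢ(z̃ᵢ − w̃ᵢᵀβ)² + λ‖β‖₁ + ∑_{r=1}^R γᵣ ‖β‖₁^{r+1}`
satisfies `(1/n)|∑ᵢ w̃ᵢⱼ(z̃ᵢ − w̃ᵢᵀβ̂)| ≤ λ + ∑_{r=1}^R γᵣ (r+1) ‖β̂‖₁^r`. -/
theorem stmt_10 (n p R : ℕ) (hn : 1 ≤ n) (hp : 1 ≤ p) (hR : 1 ≤ R)
    (W : Fin n → Fin p → ℝ) (z : Fin n → ℝ)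
    (lam : ℝ) (hlam : 0 ≤ lam) (γ : ℕ → ℝ) (hγ : ∀ r ∈ Finset.Icc 1 R, 0 ≤ γ r)
    (βhat : Fin p → ℝ)
    (hmin : IsLocalMin
      (fun β : Fin p → ℝ =>
        (1 / (2 * (n : ℝ))) * ∑ i, (z i - ∑ j, W i j * β j) ^ 2 +
          lam * ∑ j, |β j| +
          ∑ r ∈ Finset.Icc 1 R, γ r * (∑ j, |β j|) ^ (r + 1))
      βhat) :
    ∀ j, (1 / (n : ℝ)) * |∑ i, W i j * (z i - ∑ j', W i j' * βhat j')| ≤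
      lam + ∑ r ∈ Finset.Icc 1 R, γ r * ((r : ℝ) + 1) * (∑ j', |βhat j'|) ^ r := by
  intro j
  have hn0 : (0:ℝ) < n := by exact_mod_cast Nat.lt_of_lt_of_le Nat.zero_lt_one hn
  set g : ℝ := ∑ i, W i j * (z i - ∑ j', W i j' * βhat j') with hg
  set N0 : ℝ := ∑ j', |βhat j'| with hN0
  set C : ℝ := ∑ i, (W i j)^2 with hC
  set B : ℝ := lam + ∑ r ∈ Finset.Icc 1 R, γ r * ((r:ℝ)+1) * N0 ^ r with hB
  have hN0nn : 0 ≤ N0 := Finset.sum_nonneg fun _ _ => abs_nonneg _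
  have key : ∀ s : ℝ, s = 1 ∨ s = -1 → s * g ≤ (n:ℝ) * B := by
    intro s hs
    have hs2 : s^2 = 1 := by rcases hs with h|h <;> simp [h]
    have habs : |s| = 1 := by rcases hs with h|h <;> simp [h]
    set c : ℝ → Fin p → ℝ := fun t => βhat + Pi.single j (t*s) with hcdef
    have hcont : Filter.Tendsto c (𝓝 0) (𝓝 βhat) := by
      have hc : Continuous c := by
        refine continuous_const.add ?_
        exact (continuous_single j).comp (by fun_prop)
      simpa using hc.tendsto' 0 βhat (by simp [hcdef])
    have hev : ∀ᶠ t : ℝ in 𝓝 (0:ℝ),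
        (1 / (2 * (n : ℝ))) * ∑ i, (z i - ∑ j', W i j' * βhat j') ^ 2 +
          lam * ∑ j', |βhat j'| +
          ∑ r ∈ Finset.Icc 1 R, γ r * (∑ j', |βhat j'|) ^ (r + 1) ≤
        (1 / (2 * (n : ℝ))) * ∑ i, (z i - ∑ j', W i j' * c t j') ^ 2 +
          lam * ∑ j', |c t j'| +
          ∑ r ∈ Finset.Icc 1 R, γ r * (∑ j', |c t j'|) ^ (r + 1) :=
      hcont.eventually hmin
    set ψ : ℝ → ℝ := fun t => C*t/2 + (n:ℝ)*lam +
      (n:ℝ) * ∑ r ∈ Finset.Icc 1 R, γ r *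
        ∑ i ∈ Finset.range (r+1), (N0+t)^i * N0^(r-i) with hψ
    have hle : ∀ᶠ t : ℝ in 𝓝[>] (0:ℝ), s * g ≤ ψ t := by
      filter_upwards [hev.filter_mono nhdsWithin_le_nhds, self_mem_nhdsWithin] with t ht htpos
      rw [Set.mem_Ioi] at htpos
      -- notations
      set Nt : ℝ := ∑ j', |c t j'| with hNt
      have hNtnn : 0 ≤ Nt := Finset.sum_nonneg fun _ _ => abs_nonneg _
      have hNtle : Nt ≤ N0 + t := by
        calc Nt ≤ ∑ j', (|βhat j'| + |(Pi.single j (t*s) : Fin p → ℝ) j'|) :=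
              Finset.sum_le_sum fun j' _ => by
                simpa [hcdef, Pi.add_apply] using
                  abs_add_le (βhat j') ((Pi.single j (t*s) : Fin p → ℝ) j')
          _ = N0 + ∑ j', |(Pi.single j (t*s) : Fin p → ℝ) j'| := by
              rw [Finset.sum_add_distrib]
          _ = N0 + |t*s| := by
              congr 1
              simp [Pi.single_apply, apply_ite abs, Finset.sum_ite_eq']
          _ = N0 + t := by rw [abs_mul, habs, mul_one, abs_of_pos htpos]
      have hWsum : ∀ i, ∑ j', W i j' * c t j'
          = (∑ j', W i j' * βhat j') + W i j * (t*s) := by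
        intro i
        simp [hcdef, Pi.single_apply, mul_add, Finset.sum_add_distrib, mul_ite, mul_zero,
          Finset.sum_ite_eq']
      have hq : ∑ i, (z i - ∑ j', W i j' * c t j') ^ 2
          = (∑ i, (z i - ∑ j', W i j' * βhat j') ^ 2) + (t^2*C - 2*(t*s)*g) := by
        have h1 : ∀ i ∈ Finset.univ, (z i - ∑ j', W i j' * c t j') ^ 2
            = (z i - ∑ j', W i j' * βhat j') ^ 2
              - 2*(t*s)*(W i j * (z i - ∑ j', W i j' * βhat j'))
              + t^2*s^2*((W i j)^2) := by
          intro i _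
          rw [hWsum i]; ring
        rw [Finset.sum_congr rfl h1]
        rw [Finset.sum_add_distrib, Finset.sum_sub_distrib, ← Finset.mul_sum, ← Finset.mul_sum]
        rw [← hg, ← hC, hs2]
        ring
      rw [hq] at ht
      -- from ht : ... derive the step
      have hstep : t*s*g ≤ t^2*C/2 + (n:ℝ)*lam*(Nt - N0)
          + (n:ℝ)*((∑ r ∈ Finset.Icc 1 R, γ r * Nt ^ (r+1))
              - ∑ r ∈ Finset.Icc 1 R, γ r * N0 ^ (r+1)) := by
        have h2 : 0 ≤ (1/(2*(n:ℝ)))*(t^2*C - 2*(t*s)*g) + lam*(Nt - N0)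
            + ((∑ r ∈ Finset.Icc 1 R, γ r * Nt ^ (r+1))
              - ∑ r ∈ Finset.Icc 1 R, γ r * N0 ^ (r+1)) := by linarith
        have h3 := mul_le_mul_of_nonneg_left h2 (le_of_lt hn0)
        have hne : (n:ℝ) ≠ 0 := ne_of_gt hn0
        rw [mul_zero] at h3
        have : (n:ℝ) * ((1/(2*(n:ℝ)))*(t^2*C - 2*(t*s)*g))
            = t^2*C/2 - t*s*g := by field_simp
        nlinarith [h3, this]
      -- bound the nonsmooth parts
      have hpow : ∀ r ∈ Finset.Icc 1 R, γ r * Nt ^ (r+1) ≤ γ r * (N0+t) ^ (r+1) := by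
        intro r hr
        exact mul_le_mul_of_nonneg_left (pow_le_pow_left₀ hNtnn hNtle _) (hγ r hr)
      have hsum1 : (∑ r ∈ Finset.Icc 1 R, γ r * Nt ^ (r+1))
          ≤ ∑ r ∈ Finset.Icc 1 R, γ r * (N0+t) ^ (r+1) := Finset.sum_le_sum hpow
      have hgeom : ∀ r : ℕ, (N0+t)^(r+1) - N0^(r+1)
          = t * ∑ i ∈ Finset.range (r+1), (N0+t)^i * N0^(r-i) := by
        intro r
        have h := geom_sum₂_mul (N0+t) N0 (r+1)
        simp only [Nat.add_sub_cancel, add_sub_cancel_left] at h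
        rw [← h]; ring
      have hsum2 : (∑ r ∈ Finset.Icc 1 R, γ r * (N0+t) ^ (r+1))
          - (∑ r ∈ Finset.Icc 1 R, γ r * N0 ^ (r+1))
          = t * ∑ r ∈ Finset.Icc 1 R, γ r *
              ∑ i ∈ Finset.range (r+1), (N0+t)^i * N0^(r-i) := by
        rw [← Finset.sum_sub_distrib, Finset.mul_sum]
        refine Finset.sum_congr rfl fun r _ => ?_
        rw [← mul_sub, hgeom r]; ring
      -- combine : t*(s*g) ≤ t * ψ t
      have hfin : t * (s*g) ≤ t * ψ t := by
        have e1 : (n:ℝ)*lam*(Nt - N0) ≤ (n:ℝ)*lam*t := by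
          have : 0 ≤ (n:ℝ)*lam := by positivity
          nlinarith
        have e2 : (n:ℝ)*((∑ r ∈ Finset.Icc 1 R, γ r * Nt ^ (r+1))
              - ∑ r ∈ Finset.Icc 1 R, γ r * N0 ^ (r+1))
            ≤ (n:ℝ) * (t * ∑ r ∈ Finset.Icc 1 R, γ r *
              ∑ i ∈ Finset.range (r+1), (N0+t)^i * N0^(r-i)) := by
          rw [← hsum2]
          have : (∑ r ∈ Finset.Icc 1 R, γ r * Nt ^ (r+1))
              - ∑ r ∈ Finset.Icc 1 R, γ r * N0 ^ (r+1)
              ≤ (∑ r ∈ Finset.Icc 1 R, γ r * (N0+t) ^ (r+1))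
              - ∑ r ∈ Finset.Icc 1 R, γ r * N0 ^ (r+1) := by linarith
          exact mul_le_mul_of_nonneg_left this (le_of_lt hn0)
        have hexp : t * ψ t = t^2*C/2 + (n:ℝ)*lam*t
            + (n:ℝ)*(t*∑ r ∈ Finset.Icc 1 R, γ r *
              ∑ i ∈ Finset.range (r+1), (N0+t)^i * N0^(r-i)) := by
          simp only [hψ]; ring
        have h4 : t*(s*g) = t*s*g := by ring
        rw [hexp, h4]
        linarith [hstep, e1, e2]
      exact le_of_mul_le_mul_left (by linarith [hfin]) htpos
    have hψc : Continuous ψ := by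
      refine (Continuous.add (by fun_prop) ?_)
      refine continuous_const.mul (continuous_finset_sum _ fun r _ =>
        continuous_const.mul (continuous_finset_sum _ fun i _ => by fun_prop))
    have htend : Filter.Tendsto ψ (𝓝[>] (0:ℝ)) (𝓝 (ψ 0)) :=
      (hψc.tendsto 0).mono_left nhdsWithin_le_nhds
    have hlim : s * g ≤ ψ 0 := ge_of_tendsto htend hle
    have hψ0 : ψ 0 = (n:ℝ) * B := by
      have hin : ∀ r : ℕ, ∑ i ∈ Finset.range (r+1), (N0+(0:ℝ))^i * N0^(r-i)
          = ((r:ℝ)+1) * N0^r := by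
        intro r
        have : ∀ i ∈ Finset.range (r+1), (N0+(0:ℝ))^i * N0^(r-i) = N0^r := by
          intro i hi
          rw [add_zero, ← pow_add,
            Nat.add_sub_cancel' (Nat.lt_succ_iff.mp (Finset.mem_range.mp hi))]
        rw [Finset.sum_congr rfl this, Finset.sum_const, Finset.card_range]
        push_cast
        ring
      have hre : ∑ r ∈ Finset.Icc 1 R, γ r * (((r:ℝ)+1) * N0^r)
          = ∑ r ∈ Finset.Icc 1 R, γ r * ((r:ℝ)+1) * N0^r :=
        Finset.sum_congr rfl fun r _ => by ring
      simp only [hψ, hB]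
      rw [Finset.sum_congr rfl (fun r _ => by rw [hin r]), hre, mul_add, Finset.mul_sum]
      ring
    linarith [hlim, hψ0.le, hψ0.ge]
  have habs : |g| ≤ (n:ℝ) * B :=
    abs_le.mpr ⟨by linarith [key (-1) (Or.inr rfl)], by linarith [key 1 (Or.inl rfl)]⟩
  rw [one_div, inv_mul_le_iff₀ hn0]
  linarith
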